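/- Let A be a finite-dimensional k-algebra with a k-linear involutive anti-automorphism τ, let I be a τ-invariant two-sided ideal of A, and let a ∈ A with a ∉ I. If the image ā of a in A/I is a τ-invariant idempotent, then there exists a τ-invariant idempotent e ∈ a·A·aᵗ with e + I = a + I; moreover e can be taken of the form p(a·aᵗ) for a polynomial p with p(0) = 0. -/

import Mathlib

open Polynomial

/-- Newton's iteration for idempotents, at the polynomial level. -/
noncomputable def newtonSeq {k : Type*} [Field k] (p : Polynomial k) : ℕ → Polynomial k
  | 0 => p
  | (n+1) => 3 * (newtonSeq p n)^2 - 2 * (newtonSeq p n)^3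

set_option maxHeartbeats 1600000 in
/-- Lifting of τ-invariant idempotents along a quotient by a τ-invariant two-sided ideal:
if `ā` is a `τ`-invariant idempotent in `A/I`, there is a `τ`-invariant idempotent
`e ∈ a·A·τ(a)` with `e + I = a + I`, of the form `p(a·τ(a))` for a polynomial `p`
with `p(0) = 0`. -/
theorem stmt1 {k A : Type*} [Field k] [Ring A] [Algebra k A] [FiniteDimensional k A]
    (τ : A →ₗ[k] A)
    (hτ2 : ∀ x : A, τ (τ x) = x)
    (hτmul : ∀ x y : A, τ (x * y) = τ y * τ x)
    (I : Ideal A)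
    (hIright : ∀ x ∈ I, ∀ y : A, x * y ∈ I)
    (hτI : ∀ x ∈ I, τ x ∈ I)
    (a : A) (ha : a ∉ I)
    (hidem : a * a - a ∈ I)
    (hτa : τ a - a ∈ I) :
    ∃ e : A, (∃ x : A, e = a * x * τ a) ∧ e * e = e ∧ τ e = e ∧ e - a ∈ I ∧
      ∃ p : Polynomial k, p.coeff 0 = 0 ∧ e = Polynomial.aeval (a * τ a) p := by
  classical
  -- τ fixes 1
  have hτ1 : τ 1 = 1 := by
    have h1 := hτmul (τ 1) 1
    simp only [mul_one, hτ2] at h1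
    exact h1.symm
  set b : A := a * τ a with hb
  have hτb : τ b = b := by rw [hb, hτmul, hτ2]
  have hba : b - a ∈ I := by
    have h1 : a * (τ a - a) ∈ I := I.mul_mem_left a hτa
    have h2 := I.add_mem h1 hidem
    have h3 : b - a = a * (τ a - a) + (a * a - a) := by rw [hb, mul_sub]; abel
    rw [h3]; exact h2
  -- τ fixes everything in k[b]
  have hτpow : ∀ n : ℕ, τ (b ^ n) = b ^ n := by
    intro n; induction n with
    | zero => simpa using hτ1
    | succ n ih => rw [pow_succ, hτmul, ih, hτb, ← pow_succ', ← pow_succ]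
  have tauP : ∀ p : Polynomial k, τ (aeval b p) = aeval b p := by
    intro p
    induction p using Polynomial.induction_on' with
    | add p q hp hq => rw [map_add, map_add, hp, hq]
    | monomial n r => rw [aeval_monomial, ← Algebra.smul_def, map_smul, hτpow]
  -- the element c = b² - b ∈ I, expressed as a polynomial in b
  set cp : Polynomial k := X ^ 2 - X with hcp
  set c : A := aeval b cp with hcdef
  have hcP : aeval b cp = c := rfl
  have hcb : c = b * b - b := by
    rw [hcdef, hcp, map_sub, map_pow, aeval_X, pow_two]
  have hcI : c ∈ I := by
    have h1 : b * (b - a) ∈ I := I.mul_mem_left _ hba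
    have h2 : (b - a) * a ∈ I := hIright _ hba a
    have h4 : -(b - a) ∈ I := neg_mem hba
    have h5 : c = b * (b - a) + (b - a) * a + (a * a - a) + -(b - a) := by
      rw [hcb, mul_sub, sub_mul]; abel
    rw [h5]; exact I.add_mem (I.add_mem (I.add_mem h1 h2) hidem) h4
  clear_value cp c
  -- splitting lemma
  have hsplit : ∀ (u : Polynomial k) (n : ℕ),
      aeval b (cp ^ n * u) = c ^ n * aeval b u := by
    intro u n; rw [map_mul, map_pow, hcP]
  -- minimal polynomial of c: extract the relation c^(t+1) * h = c^t
  have hci : IsIntegral k c := IsIntegral.of_finite k c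
  set m : Polynomial k := minpoly k c with hmdef
  have hmne : m ≠ 0 := minpoly.ne_zero hci
  have hm : aeval c m = 0 := minpoly.aeval k c
  set t : ℕ := m.natTrailingDegree with htdef
  obtain ⟨q, hq⟩ : (X : Polynomial k) ^ t ∣ m :=
    X_pow_dvd_iff.mpr fun d hd => coeff_eq_zero_of_lt_natTrailingDegree hd
  set α : k := q.coeff 0 with hα
  have hαne : α ≠ 0 := by
    have h1 := coeff_X_pow_mul q t 0
    rw [zero_add, ← hq] at h1
    intro h0
    rw [hα, ← h1] at h0
    exact trailingCoeff_nonzero_iff_nonzero.mpr hmne h0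
  set dq : Polynomial k := q.divX with hdq
  have hqsplit : X * dq + C α = q := X_mul_divX_add q
  rw [hq, map_mul, map_pow, aeval_X] at hm
  have hqc : aeval c q = c * aeval c dq + algebraMap k A α := by
    conv_lhs => rw [← hqsplit]
    rw [map_add, map_mul, aeval_X, aeval_C]
  rw [hqc, mul_add, ← Algebra.commutes α (c ^ t), ← Algebra.smul_def] at hm
  -- hm : c ^ t * (c * aeval c dq) + α • c ^ t = 0
  have REL0 : c ^ (t+1) * ((-α⁻¹) • aeval c dq) = c ^ t := by
    have h1 : c ^ t * (c * aeval c dq) = -(α • c ^ t) :=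
      eq_neg_of_add_eq_zero_left hm
    calc c ^ (t+1) * ((-α⁻¹) • aeval c dq)
        = (-α⁻¹) • (c ^ t * (c * aeval c dq)) := by
          rw [mul_smul_comm, pow_succ, mul_assoc]
      _ = (-α⁻¹) • (-(α • c ^ t)) := by rw [h1]
      _ = c ^ t := by
          rw [smul_neg, neg_smul, neg_neg, smul_smul, inv_mul_cancel₀ hαne, one_smul]
  set N : ℕ := t + 1 with hN
  set HP : Polynomial k := (-α⁻¹) • (dq.comp cp) with hHP
  have hHPval : aeval b HP = (-α⁻¹) • aeval c dq := by
    rw [hHP, map_smul, aeval_comp, hcP]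
  have REL : c ^ (N+1) * aeval b HP = c ^ N := by
    rw [hHPval, hN]
    calc c ^ (t+1+1) * ((-α⁻¹) • aeval c dq)
        = c * (c ^ (t+1) * ((-α⁻¹) • aeval c dq)) := by
          rw [← mul_assoc, ← pow_succ']
      _ = c * c ^ t := by rw [REL0]
      _ = c ^ (t+1) := by rw [← pow_succ']
  clear_value N HP
  -- the key collapsing lemma
  have KEY : ∀ j : ℕ, aeval b (cp ^ (N + j) * HP ^ j) = c ^ N := by
    intro j; induction j with
    | zero => rw [pow_zero, mul_one, Nat.add_zero, map_pow, hcP]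
    | succ j ih =>
      calc aeval b (cp ^ (N + (j+1)) * HP ^ (j+1))
          = aeval b (cp ^ (N+1) * (HP * (cp ^ j * HP ^ j))) := by congr 1; ring
        _ = c ^ (N+1) * aeval b (HP * (cp ^ j * HP ^ j)) := hsplit _ _
        _ = c ^ (N+1) * (aeval b HP * aeval b (cp ^ j * HP ^ j)) := by rw [map_mul]
        _ = (c ^ (N+1) * aeval b HP) * aeval b (cp ^ j * HP ^ j) := by rw [mul_assoc]
        _ = c ^ N * aeval b (cp ^ j * HP ^ j) := by rw [REL]
        _ = aeval b (cp ^ N * (cp ^ j * HP ^ j)) := (hsplit _ _).symm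
        _ = aeval b (cp ^ (N + j) * HP ^ j) := by congr 1; ring
        _ = c ^ N := ih
  -- the Fitting idempotent f
  set fp : Polynomial k := cp ^ N * HP ^ N with hfp
  set f : A := aeval b fp with hfdef
  have hff : f * f = f := by
    calc f * f = aeval b (fp * fp) := (map_mul _ _ _).symm
      _ = aeval b (cp ^ (N + N) * HP ^ N) * aeval b (HP ^ N) := by
          rw [← map_mul]; congr 1; rw [hfp]; ring
      _ = c ^ N * aeval b (HP ^ N) := by rw [KEY N]
      _ = aeval b (cp ^ N * HP ^ N) := (hsplit _ _).symm
      _ = f := rfl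
  have hcNf : c ^ N * f = c ^ N := by
    calc c ^ N * f = aeval b (cp ^ N * fp) := (hsplit fp N).symm
      _ = aeval b (cp ^ (N + N) * HP ^ N) := by congr 1; rw [hfp]; ring
      _ = c ^ N := KEY N
  have hfI : f ∈ I := by
    have h1 : f = aeval b (cp * (cp ^ t * HP ^ N)) := by
      rw [hfdef]; congr 1; rw [hfp, hN]; ring
    rw [h1, map_mul, hcP]
    exact hIright c hcI _
  clear_value fp f
  have h1f : (1 - f) * (1 - f) = 1 - f := IsIdempotentElem.one_sub hff
  have h1fpow : ∀ n : ℕ, (1 - f) ^ (n + 1) = 1 - f := by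
    intro n; induction n with
    | zero => rw [pow_one]
    | succ n ih => rw [pow_succ, ih, h1f]
  -- c₁ = c(1-f) is nilpotent with c₁^N = 0
  set c₁p : Polynomial k := cp * (1 - fp) with hc₁p
  clear_value c₁p
  have h1fp : aeval b (1 - fp) = 1 - f := by
    rw [map_sub, map_one, ← hfdef]
  have hc₁val : aeval b c₁p = c * (1 - f) := by
    rw [hc₁p, map_mul, h1fp, hcP]
  have hc₁I : aeval b c₁p ∈ I := by rw [hc₁val]; exact hIright c hcI _
  have hc₁N : (aeval b c₁p) ^ N = 0 := by
    calc (aeval b c₁p) ^ N = aeval b (cp ^ N * (1 - fp) ^ N) := by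
          rw [← map_pow]; congr 1; rw [hc₁p, mul_pow]
      _ = c ^ N * aeval b ((1 - fp) ^ N) := hsplit _ _
      _ = c ^ N * (1 - f) ^ N := by rw [map_pow, h1fp]
      _ = c ^ N * (1 - f) := by rw [hN, h1fpow]
      _ = 0 := by rw [mul_sub, mul_one, hcNf, sub_self]
  -- Newton iteration starting from b(1-f)
  set p₀ : Polynomial k := X * (1 - fp) with hp₀
  clear_value p₀
  have hdvd : ∀ j : ℕ, (X : Polynomial k) ∣ newtonSeq p₀ j := by
    intro j; induction j with
    | zero => exact ⟨1 - fp, hp₀⟩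
    | succ j ih =>
      show (X : Polynomial k) ∣ 3 * (newtonSeq p₀ j)^2 - 2 * (newtonSeq p₀ j)^3
      exact dvd_sub (Dvd.dvd.mul_left (dvd_pow ih two_ne_zero) 3)
        (Dvd.dvd.mul_left (dvd_pow ih three_ne_zero) 2)
  have hB : aeval b p₀ = b * (1 - f) := by
    rw [hp₀, map_mul, aeval_X, h1fp]
  have hmain : ∀ j : ℕ, (aeval b (newtonSeq p₀ j) - b ∈ I) ∧
      ∃ s : Polynomial k, aeval b (newtonSeq p₀ j) * aeval b (newtonSeq p₀ j)
        - aeval b (newtonSeq p₀ j) = aeval b (c₁p ^ 2 ^ j * s) := by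
    intro j; induction j with
    | zero =>
      have h0 : newtonSeq p₀ 0 = p₀ := rfl
      constructor
      · rw [h0, hB, show b * (1 - f) - b = -(b * f) by rw [mul_sub, mul_one]; abel]
        exact neg_mem (I.mul_mem_left b hfI)
      · refine ⟨1, ?_⟩
        have hA : aeval b p₀ * aeval b p₀ = b * b * (1 - f) := by
          rw [← map_mul, show p₀ * p₀ = X ^ 2 * ((1 - fp) * (1 - fp)) by rw [hp₀]; ring,
            map_mul, map_pow, aeval_X, map_mul, h1fp, h1f, pow_two]
        rw [h0, hA, hB, ← sub_mul, ← hcb, pow_zero, pow_one, mul_one, hc₁val]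
    | succ j ih =>
      obtain ⟨ihmem, s, ihd⟩ := ih
      set p : Polynomial k := newtonSeq p₀ j with hp
      have hstep : newtonSeq p₀ (j+1) = 3 * p^2 - 2 * p^3 := rfl
      have hdjI : aeval b p * aeval b p - aeval b p ∈ I := by
        have hpos : 0 < (2:ℕ) ^ j := pow_pos (by norm_num) j
        have h2 : (2:ℕ) ^ j = (2 ^ j - 1) + 1 := by omega
        have h3 : c₁p ^ 2 ^ j * s = c₁p * (c₁p ^ (2 ^ j - 1) * s) := by
          conv_lhs => rw [h2]
          ring
        rw [ihd, h3, map_mul]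
        exact hIright _ hc₁I _
      constructor
      · have hdiff : aeval b (newtonSeq p₀ (j+1)) - aeval b p
            = (aeval b p * aeval b p - aeval b p) * aeval b (1 - 2 * p) := by
          rw [hstep, ← map_sub,
            show 3 * p^2 - 2 * p^3 - p = (p * p - p) * (1 - 2 * p) by ring,
            map_mul, map_sub, map_mul]
        have habel : aeval b (newtonSeq p₀ (j+1)) - b
            = (aeval b (newtonSeq p₀ (j+1)) - aeval b p) + (aeval b p - b) := by abel
        rw [habel]
        exact I.add_mem (by rw [hdiff]; exact hIright _ hdjI _) ihmem
      · refine ⟨s * s * ((1 - 2 * p) ^ 2 - 4), ?_⟩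
        calc aeval b (newtonSeq p₀ (j+1)) * aeval b (newtonSeq p₀ (j+1))
              - aeval b (newtonSeq p₀ (j+1))
            = aeval b ((p * p - p) * (p * p - p) * ((1 - 2*p)^2 - 4)) := by
              rw [hstep, ← map_mul, ← map_sub]; congr 1; ring
          _ = (aeval b p * aeval b p - aeval b p) * (aeval b p * aeval b p - aeval b p)
              * aeval b ((1 - 2*p)^2 - 4) := by
              rw [map_mul, map_mul, map_sub, map_mul]
          _ = aeval b (c₁p ^ 2 ^ j * s) * aeval b (c₁p ^ 2 ^ j * s)
              * aeval b ((1 - 2*p)^2 - 4) := by rw [ihd]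
          _ = aeval b (c₁p ^ 2 ^ (j+1) * (s * s * ((1 - 2 * p) ^ 2 - 4))) := by
              rw [← map_mul, ← map_mul]; congr 1
              rw [pow_succ 2 j, pow_mul]; ring
  -- assemble the answer
  obtain ⟨hmemN, s, hdN⟩ := hmain N
  have hzero : aeval b (c₁p ^ 2 ^ N * s) = 0 := by
    have h2 : (2:ℕ) ^ N = N + (2 ^ N - N) := by
      have := Nat.lt_two_pow_self (n := N); omega
    rw [h2, pow_add, mul_assoc, map_mul, map_pow, hc₁N, zero_mul]
  set e : A := aeval b (newtonSeq p₀ N) with hedef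
  have heidem : e * e = e := sub_eq_zero.mp (hdN.trans hzero)
  obtain ⟨r, hr⟩ := hdvd N
  have e1 : e = b * aeval b r := by rw [hedef, hr, map_mul, aeval_X]
  have e2 : e = aeval b r * b := by
    rw [hedef, hr, show (X : Polynomial k) * r = r * X from mul_comm _ _,
      map_mul, aeval_X]
  refine ⟨e, ⟨τ a * aeval b (r * r) * a, ?_⟩, heidem, tauP _, ?_, newtonSeq p₀ N,
    X_dvd_iff.mp (hdvd N), rfl⟩
  · have h3 : a * (τ a * aeval b (r * r) * a) * τ a
        = (b * aeval b r) * (aeval b r * b) := by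
      rw [map_mul, hb]; simp only [mul_assoc]
    rw [h3, ← e1, ← e2, heidem]
  · have habel : e - a = (e - b) + (b - a) := by abel
    rw [habel]; exact I.add_mem hmemN hba
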